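/- Let K be a symmetric convex body in ℝⁿ (K = −K), let x ∈ int K, and y ∈ ℝⁿ \ {0}. Then 1/b*_K(x,y) = sup{ |⟨y,w⟩| / √(1 − ⟨x,w⟩²) : w ∈ K* }. (Note that ⟨x,w⟩² < 1 for every nonzero w ∈ K* since x ∈ int K, so each quotient is well defined, and the value at w = 0 is 0.) -/

import Mathlib

/-- A convex body in ℝⁿ: a compact convex set with nonempty interior. -/
def IsConvexBody {n : ℕ} (K : Set (EuclideanSpace ℝ (Fin n))) : Prop :=
  IsCompact K ∧ Convex ℝ K ∧ (interior K).Nonempty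

/-- The ellipse with parameters `(a, b)` through `x` in direction `y`,
`θ ↦ (cos θ)•a + b(sin θ)•y + (x - a)`, is inscribed in `K`. -/
def InscribedEllipse {n : ℕ} (K : Set (EuclideanSpace ℝ (Fin n)))
    (x y a : EuclideanSpace ℝ (Fin n)) (b : ℝ) : Prop :=
  ∀ θ : ℝ, (Real.cos θ) • a + (b * Real.sin θ) • y + (x - a) ∈ K

/-- `b*_K(x,y)`: the supremum of `b > 0` such that some ellipse with parameters
`(a,b)` through `x` in direction `y` is inscribed in `K`. -/
noncomputable def bStar {n : ℕ} (K : Set (EuclideanSpace ℝ (Fin n)))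
    (x y : EuclideanSpace ℝ (Fin n)) : ℝ :=
  sSup { b : ℝ | 0 < b ∧ ∃ a, InscribedEllipse K x y a b }

/-- The polar `K* = { w : ⟨z, w⟩ ≤ 1 for all z ∈ K }`. -/
def polarSet {n : ℕ} (K : Set (EuclideanSpace ℝ (Fin n))) : Set (EuclideanSpace ℝ (Fin n)) :=
  { w | ∀ z ∈ K, (inner ℝ z w : ℝ) ≤ 1 }

lemma trig_bound (A B D : ℝ) (h : ∀ θ : ℝ, A * Real.cos θ + B * Real.sin θ ≤ D) :
    Real.sqrt (A ^ 2 + B ^ 2) ≤ D := by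
  rcases eq_or_lt_of_le (by positivity : (0:ℝ) ≤ A ^ 2 + B ^ 2) with h0 | h0
  · have hB1 := h (Real.pi / 2)
    have hB2 := h (-(Real.pi / 2))
    simp [Real.cos_pi_div_two, Real.sin_pi_div_two] at hB1 hB2
    rw [← h0, Real.sqrt_zero]
    linarith
  · set ρ := Real.sqrt (A ^ 2 + B ^ 2) with hρdef
    have hρ : 0 < ρ := Real.sqrt_pos.2 h0
    have hρsq : ρ ^ 2 = A ^ 2 + B ^ 2 := Real.sq_sqrt (le_of_lt h0)
    have ht1 : |A / ρ| ≤ 1 := by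
      rw [abs_div, abs_of_pos hρ, div_le_one hρ]
      nlinarith [sq_abs A, abs_nonneg A, sq_nonneg B, sq_nonneg (|A| - ρ)]
    have hsin : Real.sin (Real.arccos (A / ρ)) = |B| / ρ := by
      rw [Real.sin_arccos]
      rw [show 1 - (A / ρ) ^ 2 = (|B| / ρ) ^ 2 by
        rw [div_pow, div_pow, sq_abs]
        field_simp
        nlinarith]
      exact Real.sqrt_sq (by positivity)
    have hcos : Real.cos (Real.arccos (A / ρ)) = A / ρ :=
      Real.cos_arccos (by linarith [abs_le.1 ht1]) (by linarith [abs_le.1 ht1])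
    rcases le_or_gt 0 B with hB | hB
    · have := h (Real.arccos (A / ρ))
      rw [hcos, hsin, abs_of_nonneg hB] at this
      have key : A * (A / ρ) + B * (B / ρ) = ρ := by
        field_simp
        nlinarith
      linarith [key ▸ this]
    · have := h (-(Real.arccos (A / ρ)))
      rw [Real.cos_neg, Real.sin_neg, hcos, hsin, abs_of_neg hB] at this
      have key : A * (A / ρ) + B * -(-B / ρ) = ρ := by
        field_simp
        nlinarith
      linarith [key ▸ this]

lemma ellipse_nec (b c A s : ℝ)
    (h1 : ∀ θ : ℝ, Real.cos θ * A + b * Real.sin θ * s + (c - A) ≤ 1)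
    (h2 : ∀ θ : ℝ, -(Real.cos θ * A + b * Real.sin θ * s + (c - A)) ≤ 1)
    (hcle : c ≤ 1) (hcge : -1 ≤ c) :
    b ^ 2 * s ^ 2 ≤ 1 - c ^ 2 := by
  have hb1 := trig_bound A (b * s) (1 - c + A) (fun θ => by linarith [h1 θ])
  have hb2 := trig_bound (-A) (-(b * s)) (1 + c - A) (fun θ => by linarith [h2 θ])
  rw [neg_sq, neg_sq] at hb2
  set ρ := Real.sqrt (A ^ 2 + (b * s) ^ 2) with hρ
  have hρ0 : 0 ≤ ρ := Real.sqrt_nonneg _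
  have hρsq : ρ ^ 2 = A ^ 2 + (b * s) ^ 2 := Real.sq_sqrt (by positivity)
  have hP : (0:ℝ) ≤ (1 - c + A) ^ 2 - ρ ^ 2 := by
    nlinarith [mul_self_le_mul_self hρ0 hb1]
  have hQ : (0:ℝ) ≤ (1 + c - A) ^ 2 - ρ ^ 2 := by
    nlinarith [mul_self_le_mul_self hρ0 hb2]
  have hint1 : (0:ℝ) ≤ (1 + c) * ((1 - c + A) ^ 2 - ρ ^ 2) := mul_nonneg (by linarith) hP
  have hint2 : (0:ℝ) ≤ (1 - c) * ((1 + c - A) ^ 2 - ρ ^ 2) := mul_nonneg (by linarith) hQ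
  nlinarith [hint1, hint2, hρsq]

lemma ellipse_suf (b c s : ℝ) (θ : ℝ) (hb2 : b ^ 2 * s ^ 2 ≤ 1 - c ^ 2) :
    Real.cos θ * c + b * Real.sin θ * s ≤ 1 := by
  have hid : (c * Real.cos θ + (b * s) * Real.sin θ) ^ 2
      + ((b * s) * Real.cos θ - c * Real.sin θ) ^ 2
      = (c ^ 2 + (b * s) ^ 2) * (Real.sin θ ^ 2 + Real.cos θ ^ 2) := by ring
  rw [Real.sin_sq_add_cos_sq, mul_one] at hid
  nlinarith [sq_nonneg ((b * s) * Real.cos θ - c * Real.sin θ),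
             sq_nonneg (c * Real.cos θ + (b * s) * Real.sin θ - 1)]

lemma mem_of_polar {n : ℕ} {K : Set (EuclideanSpace ℝ (Fin n))} (hcl : IsClosed K)
    (hconv : Convex ℝ K) (h0 : (0 : EuclideanSpace ℝ (Fin n)) ∈ K)
    {z : EuclideanSpace ℝ (Fin n)} (hz : ∀ w ∈ polarSet K, (inner ℝ z w : ℝ) ≤ 1) : z ∈ K := by
  by_contra hzK
  obtain ⟨f, u, hfa, hfz⟩ := geometric_hahn_banach_closed_point hconv hcl hzK
  have hu : 0 < u := by simpa using hfa 0 h0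
  set w' := (InnerProductSpace.toDual ℝ (EuclideanSpace ℝ (Fin n))).symm f with hw'
  have hrepr : ∀ v : EuclideanSpace ℝ (Fin n), (inner ℝ v w' : ℝ) = f v := by
    intro v
    rw [real_inner_comm]
    exact InnerProductSpace.toDual_symm_apply
  have hwmem : u⁻¹ • w' ∈ polarSet K := by
    intro zz hzz
    rw [real_inner_smul_right, hrepr]
    have := hfa zz hzz
    rw [inv_mul_le_iff₀ hu]
    linarith
  have := hz _ hwmem
  rw [real_inner_smul_right, hrepr, inv_mul_le_iff₀ hu] at this
  linarith

lemma ball_polar {n : ℕ} {K : Set (EuclideanSpace ℝ (Fin n))} {p w : EuclideanSpace ℝ (Fin n)}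
    {r : ℝ} (hr : 0 < r) (hb : Metric.closedBall p r ⊆ K) (hw : w ∈ polarSet K) :
    r * ‖w‖ ≤ 1 - (inner ℝ p w : ℝ) := by
  rcases eq_or_ne w 0 with rfl | hw0
  · simp
  · have hns : (0:ℝ) < ‖w‖ := norm_pos_iff.2 hw0
    have hz : p + (r * ‖w‖⁻¹) • w ∈ K := hb (by
      rw [Metric.mem_closedBall, dist_eq_norm, add_sub_cancel_left, norm_smul]
      rw [Real.norm_eq_abs, abs_of_pos (by positivity)]
      field_simp
      exact le_rfl)
    have h1 := hw _ hz
    rw [inner_add_left, real_inner_smul_left, real_inner_self_eq_norm_sq] at h1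
    have h2 : r * ‖w‖⁻¹ * ‖w‖ ^ 2 = r * ‖w‖ := by field_simp
    linarith [h2 ▸ h1]


/-- For a symmetric convex body, 1/b*_K(x,y) = sup over w ∈ K* of |⟨y,w⟩|/√(1 − ⟨x,w⟩²);
moreover ⟨x,w⟩² < 1 for every nonzero w ∈ K*, so each quotient is well defined
(the value at w = 0 being 0). -/
theorem stmt_14 {n : ℕ} (hn : 1 ≤ n) (K : Set (EuclideanSpace ℝ (Fin n)))
    (hK : IsConvexBody K) (hsym : K = -K) (x y : EuclideanSpace ℝ (Fin n))
    (hx : x ∈ interior K) (hy : y ≠ 0) :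
    (∀ w ∈ polarSet K, w ≠ 0 → (inner ℝ x w : ℝ) ^ 2 < 1) ∧
    1 / bStar K x y =
      sSup { t : ℝ | ∃ w ∈ polarSet K,
        t = |(inner ℝ y w : ℝ)| / Real.sqrt (1 - (inner ℝ x w : ℝ) ^ 2) } := by
  obtain ⟨hKcomp, hKconv, -⟩ := hK
  have hxK : x ∈ K := interior_subset hx
  have hnxK : -x ∈ K := by
    have hx' : x ∈ -K := hsym ▸ hxK
    exact Set.mem_neg.1 hx'
  have h0K : (0 : EuclideanSpace ℝ (Fin n)) ∈ K := by
    have := hKconv hxK hnxK (by norm_num : (0:ℝ) ≤ 1/2) (by norm_num : (0:ℝ) ≤ 1/2) (by norm_num)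
    simpa [smul_neg] using this
  obtain ⟨ε, hε, hball⟩ := Metric.mem_nhds_iff.1 (mem_interior_iff_mem_nhds.1 hx)
  set r := ε / 2 with hrdef
  have hr : 0 < r := by positivity
  have hbx : Metric.closedBall x r ⊆ K :=
    subset_trans (Metric.closedBall_subset_ball (by rw [hrdef]; linarith)) hball
  have hbnx : Metric.closedBall (-x) r ⊆ K := by
    intro v hv
    have hmv : -v ∈ Metric.closedBall x r := by
      rw [Metric.mem_closedBall] at hv ⊢
      calc dist (-v) x = dist (-v) (-(-x)) := by rw [neg_neg]
        _ = dist v (-x) := dist_neg_neg v (-x)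
        _ ≤ r := hv
    rw [hsym]
    exact Set.mem_neg.2 (hbx hmv)
  have hc1 : ∀ w ∈ polarSet K, r * ‖w‖ ≤ 1 - (inner ℝ x w : ℝ) :=
    fun w hw => ball_polar hr hbx hw
  have hc2 : ∀ w ∈ polarSet K, r * ‖w‖ ≤ 1 + (inner ℝ x w : ℝ) := by
    intro w hw
    have := ball_polar hr hbnx hw
    rw [inner_neg_left] at this
    linarith
  have part1 : ∀ w ∈ polarSet K, w ≠ 0 → (inner ℝ x w : ℝ) ^ 2 < 1 := by
    intro w hw hw0
    have h1 := hc1 w hw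
    have h2 := hc2 w hw
    have hrw : 0 < r * ‖w‖ := mul_pos hr (norm_pos_iff.2 hw0)
    nlinarith
  set S : Set ℝ := { t : ℝ | ∃ w ∈ polarSet K,
      t = |(inner ℝ y w : ℝ)| / Real.sqrt (1 - (inner ℝ x w : ℝ) ^ 2) } with hSdef
  have h0S : (0:ℝ) ∈ S := ⟨0, fun z hz => by simp, by simp⟩
  have hSne : S.Nonempty := ⟨0, h0S⟩
  have hSbdd : BddAbove S := by
    refine ⟨‖y‖ / r, ?_⟩
    rintro t ⟨w, hw, rfl⟩
    rcases eq_or_ne w 0 with rfl | hw0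
    · simp
      positivity
    · have hnw : 0 < ‖w‖ := norm_pos_iff.2 hw0
      have h1 := hc1 w hw
      have h2 := hc2 w hw
      have hsq : (r * ‖w‖) ^ 2 ≤ 1 - (inner ℝ x w : ℝ) ^ 2 := by
        nlinarith [mul_le_mul h1 h2 (by positivity : (0:ℝ) ≤ r * ‖w‖) (le_trans (by positivity) h1)]
      have hsqrt : r * ‖w‖ ≤ Real.sqrt (1 - (inner ℝ x w : ℝ) ^ 2) := by
        have := Real.sqrt_le_sqrt hsq
        rwa [Real.sqrt_sq (by positivity)] at this
      calc |(inner ℝ y w : ℝ)| / Real.sqrt (1 - (inner ℝ x w : ℝ) ^ 2)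
          ≤ (‖y‖ * ‖w‖) / (r * ‖w‖) :=
            div_le_div₀ (by positivity) (abs_real_inner_le_norm y w) (by positivity) hsqrt
        _ = ‖y‖ / r := mul_div_mul_right _ _ (ne_of_gt hnw)
  obtain ⟨R, hR0, hR⟩ := hKcomp.isBounded.subset_closedBall_lt 0 0
  have hyn : 0 < ‖y‖ := norm_pos_iff.2 hy
  set w₀ : EuclideanSpace ℝ (Fin n) := (R * ‖y‖)⁻¹ • y with hw₀def
  have hw₀p : w₀ ∈ polarSet K := by
    intro z hz
    rw [hw₀def, real_inner_smul_right]
    have hz' : ‖z‖ ≤ R := mem_closedBall_zero_iff.1 (hR hz)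
    have hin : (inner ℝ z y : ℝ) ≤ ‖z‖ * ‖y‖ := real_inner_le_norm z y
    rw [inv_mul_le_iff₀ (by positivity)]
    nlinarith
  have hw₀y : 0 < (inner ℝ y w₀ : ℝ) := by
    rw [hw₀def, real_inner_smul_right, real_inner_self_eq_norm_sq]
    positivity
  have hw₀0 : w₀ ≠ 0 := by
    intro h
    rw [h] at hw₀y
    simp at hw₀y
  set M := sSup S with hMdef
  have ht₀pos : 0 < |(inner ℝ y w₀ : ℝ)| / Real.sqrt (1 - (inner ℝ x w₀ : ℝ) ^ 2) := by
    apply div_pos (abs_pos.2 (ne_of_gt hw₀y))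
    exact Real.sqrt_pos.2 (by linarith [part1 w₀ hw₀p hw₀0])
  have hMpos : 0 < M := lt_of_lt_of_le ht₀pos (le_csSup hSbdd ⟨w₀, hw₀p, rfl⟩)
  have hNec : ∀ (b : ℝ) (a : EuclideanSpace ℝ (Fin n)), 0 < b → InscribedEllipse K x y a b →
      ∀ w ∈ polarSet K, b ^ 2 * (inner ℝ y w : ℝ) ^ 2 ≤ 1 - (inner ℝ x w : ℝ) ^ 2 := by
    intro b a hb hell w hw
    have hnegw : -w ∈ polarSet K := by
      intro z hz
      have hz' : -z ∈ -K := Set.neg_mem_neg.2 hz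
      rw [← hsym] at hz'
      have h' := hw _ hz'
      rw [inner_neg_left] at h'
      rw [inner_neg_right]
      linarith
    have h1 : ∀ θ : ℝ, Real.cos θ * (inner ℝ a w : ℝ) + b * Real.sin θ * (inner ℝ y w : ℝ)
        + ((inner ℝ x w : ℝ) - (inner ℝ a w : ℝ)) ≤ 1 := by
      intro θ
      have h' := hw _ (hell θ)
      simpa only [inner_add_left, inner_sub_left, real_inner_smul_left, mul_assoc] using h'
    have h2 : ∀ θ : ℝ, -(Real.cos θ * (inner ℝ a w : ℝ) + b * Real.sin θ * (inner ℝ y w : ℝ)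
        + ((inner ℝ x w : ℝ) - (inner ℝ a w : ℝ))) ≤ 1 := by
      intro θ
      have h' := hnegw _ (hell θ)
      simpa only [inner_neg_right, inner_add_left, inner_sub_left, real_inner_smul_left,
        mul_assoc] using h'
    have hcle : (inner ℝ x w : ℝ) ≤ 1 := hw x hxK
    have hcge : -1 ≤ (inner ℝ x w : ℝ) := by
      have h' := hw (-x) hnxK
      rw [inner_neg_left] at h'
      linarith
    exact ellipse_nec b (inner ℝ x w) (inner ℝ a w) (inner ℝ y w) h1 h2 hcle hcge
  have hSuf : ∀ b : ℝ, 0 < b →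
      (∀ w ∈ polarSet K, b ^ 2 * (inner ℝ y w : ℝ) ^ 2 ≤ 1 - (inner ℝ x w : ℝ) ^ 2) →
      InscribedEllipse K x y x b := by
    intro b hb hbd θ
    apply mem_of_polar hKcomp.isClosed hKconv h0K
    intro w hw
    simp only [inner_add_left, real_inner_smul_left, sub_self, inner_zero_left, add_zero,
      mul_assoc]
    linarith [ellipse_suf b (inner ℝ x w) (inner ℝ y w) θ (hbd w hw)]
  have hBeq : { b : ℝ | 0 < b ∧ ∃ a, InscribedEllipse K x y a b } = Set.Ioc 0 (1 / M) := by
    ext b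
    simp only [Set.mem_setOf_eq, Set.mem_Ioc]
    constructor
    · rintro ⟨hb, a, hell⟩
      refine ⟨hb, ?_⟩
      have hMle : M ≤ 1 / b := by
        apply csSup_le hSne
        rintro t ⟨w, hw, rfl⟩
        rcases eq_or_ne w 0 with rfl | hw0
        · simp
          positivity
        · have hsq : 0 < Real.sqrt (1 - (inner ℝ x w : ℝ) ^ 2) :=
            Real.sqrt_pos.2 (by linarith [part1 w hw hw0])
          rw [div_le_div_iff₀ hsq hb, one_mul]
          have hkey := hNec b a hb hell w hw
          have h1 : (|(inner ℝ y w : ℝ)| * b) ^ 2 ≤ 1 - (inner ℝ x w : ℝ) ^ 2 := by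
            rw [mul_pow, sq_abs]
            nlinarith
          have := Real.sqrt_le_sqrt h1
          rwa [Real.sqrt_sq (by positivity)] at this
      rw [le_div_iff₀ hMpos]
      calc b * M ≤ b * (1 / b) := mul_le_mul_of_nonneg_left hMle hb.le
        _ = 1 := by field_simp
    · rintro ⟨hb, hble⟩
      refine ⟨hb, x, hSuf b hb ?_⟩
      intro w hw
      rcases eq_or_ne w 0 with rfl | hw0
      · simp
      · have htS : |(inner ℝ y w : ℝ)| / Real.sqrt (1 - (inner ℝ x w : ℝ) ^ 2) ≤ M :=
          le_csSup hSbdd ⟨w, hw, rfl⟩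
        have hc2lt := part1 w hw hw0
        have hsq : 0 < Real.sqrt (1 - (inner ℝ x w : ℝ) ^ 2) := Real.sqrt_pos.2 (by linarith)
        have hsqsq : Real.sqrt (1 - (inner ℝ x w : ℝ) ^ 2) ^ 2 = 1 - (inner ℝ x w : ℝ) ^ 2 :=
          Real.sq_sqrt (by linarith)
        have h1 : b * (|(inner ℝ y w : ℝ)| / Real.sqrt (1 - (inner ℝ x w : ℝ) ^ 2)) ≤ (1 / M) * M :=
          mul_le_mul hble htS (by positivity) (by positivity)
        rw [one_div_mul_cancel (ne_of_gt hMpos)] at h1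
        have h2 : b * |(inner ℝ y w : ℝ)| ≤ Real.sqrt (1 - (inner ℝ x w : ℝ) ^ 2) := by
          rw [mul_div_assoc'] at h1
          exact (div_le_one hsq).1 h1
        nlinarith [sq_abs (inner ℝ y w : ℝ), abs_nonneg (inner ℝ y w : ℝ),
          mul_self_le_mul_self (by positivity : (0:ℝ) ≤ b * |(inner ℝ y w : ℝ)|) h2]
  refine ⟨part1, ?_⟩
  rw [show bStar K x y = sSup { b : ℝ | 0 < b ∧ ∃ a, InscribedEllipse K x y a b } from rfl,
    hBeq, csSup_Ioc (by positivity : (0:ℝ) < 1 / M), one_div_one_div]
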